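/- arXiv:2203.04922 — 3 statements merged into one kernel-verified Lean document; each statement's English description precedes it below -/
import Mathlib

section
/- For every real r > 1 there exists a constant C_r > 0 with the following property: for every τ ≥ 0 and all a, b : ℤ² → [0,∞], the convolution (a⋆b)(k) := ∑_{j∈ℤ²} a(j)·b(k−j) satisfies (∑_{k∈ℤ²} ‖k‖^{2r} e^{2τ‖k‖} ((a⋆b)(k))²)^{1/2} ≤ C_r · (a(0) + S_{r,τ}(a)) · (b(0) + S_{r,τ}(b)), the inequality being interpreted in the extended nonnegative reals. (This is the Fourier-coefficient form of the analytic-Gevrey algebra property ‖A^r e^{τA}(fg)‖_{L²_x} ≤ C_r(|f̂₀| + ‖A^r e^{τA} f‖_{L²_x})(|ĝ₀| + ‖A^r e^{τA} g‖_{L²_x}).) -/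
open scoped ENNReal

noncomputable section

/-- Euclidean norm of a lattice point `k ∈ ℤ²` viewed as a vector in `ℝ²`. -/
def nz (k : ℤ × ℤ) : ℝ := Real.sqrt ((k.1 : ℝ) ^ 2 + (k.2 : ℝ) ^ 2)

/-- The weighted ℓ²-norm `S_{ρ,τ}(a) = (∑_k ‖k‖^{2ρ} e^{2τ‖k‖} a(k)²)^{1/2}`,
valued in the extended nonnegative reals. -/
def S (ρ τ : ℝ) (a : ℤ × ℤ → ℝ≥0∞) : ℝ≥0∞ :=
  (∑' k : ℤ × ℤ, ENNReal.ofReal (nz k ^ (2 * ρ) * Real.exp (2 * τ * nz k)) * (a k) ^ 2)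
    ^ ((1 : ℝ) / 2)

namespace AGA

open MeasureTheory

lemma sqrt_add_sq (a b c d : ℝ) :
    Real.sqrt ((a+c)^2+(b+d)^2) ≤ Real.sqrt (a^2+b^2) + Real.sqrt (c^2+d^2) := by
  have h1 := Real.sq_sqrt (show (0:ℝ) ≤ a^2+b^2 by positivity)
  have h2 := Real.sq_sqrt (show (0:ℝ) ≤ c^2+d^2 by positivity)
  have h3 := Real.sqrt_nonneg (a^2+b^2)
  have h4 := Real.sqrt_nonneg (c^2+d^2)
  have h5 : a*c + b*d ≤ Real.sqrt (a^2+b^2) * Real.sqrt (c^2+d^2) := by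
    nlinarith [sq_nonneg (a*d - b*c), mul_nonneg h3 h4, sq_nonneg (a*c+b*d)]
  have h6 : (a+c)^2+(b+d)^2 ≤ (Real.sqrt (a^2+b^2) + Real.sqrt (c^2+d^2))^2 := by nlinarith
  calc Real.sqrt ((a+c)^2+(b+d)^2)
      ≤ Real.sqrt ((Real.sqrt (a^2+b^2) + Real.sqrt (c^2+d^2))^2) := Real.sqrt_le_sqrt h6
    _ = _ := Real.sqrt_sq (by positivity)

lemma nz_nonneg (k : ℤ × ℤ) : 0 ≤ nz k := Real.sqrt_nonneg _

lemma nz_zero : nz (0 : ℤ × ℤ) = 0 := by simp [nz]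

lemma nz_triangle (k j : ℤ × ℤ) : nz k ≤ nz j + nz (k - j) := by
  have h := sqrt_add_sq (j.1 : ℝ) (j.2 : ℝ) ((k-j).1 : ℝ) ((k-j).2 : ℝ)
  have e1 : ((j.1 : ℝ) + ((k-j).1 : ℝ)) = (k.1 : ℝ) := by
    push_cast [Prod.fst_sub]; ring
  have e2 : ((j.2 : ℝ) + ((k-j).2 : ℝ)) = (k.2 : ℝ) := by
    push_cast [Prod.snd_sub]; ring
  rw [e1, e2] at h
  exact h

lemma one_le_nz {m : ℤ × ℤ} (hm : m ≠ 0) : 1 ≤ nz m := by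
  have h1 : m.1 ≠ 0 ∨ m.2 ≠ 0 := by
    by_contra hc
    push_neg at hc
    exact hm (Prod.ext hc.1 hc.2)
  have h : (1 : ℝ) ≤ (m.1 : ℝ) ^ 2 + (m.2 : ℝ) ^ 2 := by
    have : (1 : ℤ) ≤ m.1 ^ 2 + m.2 ^ 2 := by
      rcases h1 with h1 | h1
      · nlinarith [sq_nonneg m.2, Int.one_le_abs h1, sq_abs m.1]
      · nlinarith [sq_nonneg m.1, Int.one_le_abs h1, sq_abs m.2]
    exact_mod_cast this
  calc (1:ℝ) = Real.sqrt 1 := by simp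
  _ ≤ nz m := Real.sqrt_le_sqrt h

lemma nz_pos {m : ℤ × ℤ} (hm : m ≠ 0) : 0 < nz m := lt_of_lt_of_le one_pos (one_le_nz hm)

/-! ### generic ℝ≥0∞ sequence-space lemmas -/

lemma meas (f : ℤ × ℤ → ℝ≥0∞) : Measurable f := measurable_of_countable f

lemma sqrt_sq' (x : ℝ≥0∞) : (x ^ 2) ^ ((1:ℝ)/2) = x := by
  rw [← ENNReal.rpow_natCast x 2, ← ENNReal.rpow_mul]
  norm_num

/-- Cauchy–Schwarz for `tsum` over `ℤ × ℤ` in `ℝ≥0∞`. -/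
lemma cauchy_schwarz (f g : ℤ × ℤ → ℝ≥0∞) :
    ∑' k, f k * g k ≤ (∑' k, f k ^ 2) ^ ((1:ℝ)/2) * (∑' k, g k ^ 2) ^ ((1:ℝ)/2) := by
  have h := ENNReal.lintegral_mul_le_Lp_mul_Lq (Measure.count (α := ℤ × ℤ))
    (p := 2) (q := 2) ⟨by norm_num, by norm_num, by norm_num⟩ (meas f).aemeasurable (meas g).aemeasurable
  simp only [Pi.mul_apply, lintegral_count] at h
  have e : ∀ u : ℤ × ℤ → ℝ≥0∞, (∑' k, u k ^ (2:ℝ)) = ∑' k, u k ^ 2 := by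
    intro u
    congr 1
    funext k
    rw [← ENNReal.rpow_natCast (u k) 2]
    norm_num
  rw [e f, e g] at h
  simpa using h

/-- Minkowski for `tsum` over `ℤ × ℤ` in `ℝ≥0∞` with exponent 2. -/
lemma minkowski (f g : ℤ × ℤ → ℝ≥0∞) :
    (∑' k, (f k + g k) ^ 2) ^ ((1:ℝ)/2)
      ≤ (∑' k, f k ^ 2) ^ ((1:ℝ)/2) + (∑' k, g k ^ 2) ^ ((1:ℝ)/2) := by
  have h := ENNReal.lintegral_Lp_add_le (μ := Measure.count (α := ℤ × ℤ))
    (p := 2) (meas f).aemeasurable (meas g).aemeasurable one_le_two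
  simp only [Pi.add_apply, lintegral_count] at h
  have e : ∀ u : ℤ × ℤ → ℝ≥0∞, (∑' k, u k ^ (2:ℝ)) = ∑' k, u k ^ 2 := by
    intro u
    congr 1
    funext k
    rw [← ENNReal.rpow_natCast (u k) 2]
    norm_num
  rw [e f, e g, e (fun k => f k + g k)] at h
  simpa using h

lemma conv_comm (f g : ℤ × ℤ → ℝ≥0∞) (k : ℤ × ℤ) :
    ∑' j, f j * g (k - j) = ∑' j, g j * f (k - j) := by
  rw [← (Equiv.subLeft k).tsum_eq (fun j => g j * f (k - j))]
  congr 1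
  funext j
  simp [mul_comm]

/-- ℓ²×ℓ¹ Young inequality for convolutions, ℓ¹ norm on the first factor. -/
lemma young (f g : ℤ × ℤ → ℝ≥0∞) :
    (∑' k, (∑' j, f j * g (k - j)) ^ 2) ^ ((1:ℝ)/2)
      ≤ (∑' j, f j) * (∑' k, g k ^ 2) ^ ((1:ℝ)/2) := by
  have half : ∀ x : ℝ≥0∞, x ^ ((1:ℝ)/2) * x ^ ((1:ℝ)/2) = x := by
    intro x
    rw [← sq, ← ENNReal.rpow_natCast (x ^ ((1:ℝ)/2)) 2, ← ENNReal.rpow_mul]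
    norm_num
  have step1 : ∀ k, (∑' j, f j * g (k - j)) ^ 2
      ≤ (∑' j, f j) * (∑' j, f j * g (k - j) ^ 2) := by
    intro k
    have hcs := cauchy_schwarz (fun j => f j ^ ((1:ℝ)/2))
      (fun j => f j ^ ((1:ℝ)/2) * g (k - j))
    have e1 : (∑' j, f j ^ ((1:ℝ)/2) * (f j ^ ((1:ℝ)/2) * g (k - j)))
        = ∑' j, f j * g (k - j) := by
      congr 1; funext j; rw [← mul_assoc, half]
    have e2 : (∑' j, (f j ^ ((1:ℝ)/2)) ^ 2) = ∑' j, f j := by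
      congr 1; funext j; rw [sq, half]
    have e3 : (∑' j, (f j ^ ((1:ℝ)/2) * g (k - j)) ^ 2)
        = ∑' j, f j * g (k - j) ^ 2 := by
      congr 1; funext j; rw [mul_pow, sq (f j ^ ((1:ℝ)/2)), half]
    rw [e1, e2, e3] at hcs
    calc (∑' j, f j * g (k - j)) ^ 2
        ≤ ((∑' j, f j) ^ ((1:ℝ)/2) * (∑' j, f j * g (k - j) ^ 2) ^ ((1:ℝ)/2)) ^ 2 :=
          pow_le_pow_left₀ zero_le hcs 2
      _ = (∑' j, f j) * (∑' j, f j * g (k - j) ^ 2) := by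
          rw [mul_pow, sq ((∑' j, f j) ^ ((1:ℝ)/2)), half,
            sq ((∑' j, f j * g (k - j) ^ 2) ^ ((1:ℝ)/2)), half]
  have step2 : (∑' k, (∑' j, f j * g (k - j)) ^ 2)
      ≤ (∑' j, f j) ^ 2 * (∑' k, g k ^ 2) := by
    calc (∑' k, (∑' j, f j * g (k - j)) ^ 2)
        ≤ ∑' k, (∑' j, f j) * (∑' j, f j * g (k - j) ^ 2) :=
          ENNReal.tsum_le_tsum step1
      _ = (∑' j, f j) * ∑' (k) (j), f j * g (k - j) ^ 2 := ENNReal.tsum_mul_left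
      _ = (∑' j, f j) * ∑' (j) (k), f j * g (k - j) ^ 2 := by rw [ENNReal.tsum_comm]
      _ = (∑' j, f j) * ∑' j, f j * ∑' k, g (k - j) ^ 2 := by
          congr 1; congr 1; funext j; rw [ENNReal.tsum_mul_left]
      _ = (∑' j, f j) * ∑' j, f j * ∑' k, g k ^ 2 := by
          congr 1; congr 1; funext j; congr 1
          exact (Equiv.subRight j).tsum_eq (fun k => g k ^ 2)
      _ = (∑' j, f j) ^ 2 * (∑' k, g k ^ 2) := by
          rw [ENNReal.tsum_mul_right, sq]; ring
  calc (∑' k, (∑' j, f j * g (k - j)) ^ 2) ^ ((1:ℝ)/2)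
      ≤ ((∑' j, f j) ^ 2 * (∑' k, g k ^ 2)) ^ ((1:ℝ)/2) :=
        ENNReal.rpow_le_rpow step2 (by norm_num)
    _ = (∑' j, f j) * (∑' k, g k ^ 2) ^ ((1:ℝ)/2) := by
        rw [ENNReal.mul_rpow_of_nonneg _ _ (by norm_num : (0:ℝ) ≤ 1/2), sqrt_sq']

def u (r τ : ℝ) (m : ℤ × ℤ) : ℝ≥0∞ := ENNReal.ofReal (nz m ^ r * Real.exp (τ * nz m))
def v (τ : ℝ) (m : ℤ × ℤ) : ℝ≥0∞ := ENNReal.ofReal (Real.exp (τ * nz m))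
def hfun (r : ℝ) (m : ℤ × ℤ) : ℝ≥0∞ := if m = 0 then 0 else ENNReal.ofReal (nz m ^ (-r))
def K (r : ℝ) : ℝ≥0∞ := (∑' m, hfun r m ^ 2) ^ ((1:ℝ)/2)

lemma W_eq (r τ : ℝ) (k : ℤ × ℤ) :
    ENNReal.ofReal (nz k ^ (2 * r) * Real.exp (2 * τ * nz k)) = (u r τ k) ^ 2 := by
  rw [u, ← ENNReal.ofReal_pow (mul_nonneg (Real.rpow_nonneg (nz_nonneg k) r) (Real.exp_pos _).le)]
  congr 1
  have h1 : (nz k ^ r) ^ 2 = nz k ^ (2 * r) := by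
    rw [← Real.rpow_natCast (nz k ^ r) 2, ← Real.rpow_mul (nz_nonneg k)]
    norm_num [mul_comm]
  have h2 : (Real.exp (τ * nz k)) ^ 2 = Real.exp (2 * τ * nz k) := by
    rw [sq, ← Real.exp_add]; ring_nf
  rw [mul_pow, h1, h2]

lemma rpow_add_le (r : ℝ) (hr : 0 ≤ r) {x y : ℝ} (hx : 0 ≤ x) (hy : 0 ≤ y) :
    (x + y) ^ r ≤ 2 ^ r * (x ^ r + y ^ r) := by
  have h1 : x + y ≤ 2 * max x y := by
    rcases le_total x y with h | h
    · rw [max_eq_right h]; linarith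
    · rw [max_eq_left h]; linarith
  calc (x + y) ^ r ≤ (2 * max x y) ^ r :=
        Real.rpow_le_rpow (by positivity) h1 hr
    _ = 2 ^ r * (max x y) ^ r := Real.mul_rpow (by norm_num) (le_max_iff.2 (Or.inl hx))
    _ ≤ 2 ^ r * (x ^ r + y ^ r) := by
        apply mul_le_mul_of_nonneg_left _ (Real.rpow_nonneg (by norm_num) r)
        rcases le_total x y with h | h
        · rw [max_eq_right h]; nlinarith [Real.rpow_nonneg hx r]
        · rw [max_eq_left h]; nlinarith [Real.rpow_nonneg hy r]

lemma real_weight {r τ : ℝ} (hr : 0 ≤ r) (hτ : 0 ≤ τ) (k j : ℤ × ℤ) :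
    nz k ^ r * Real.exp (τ * nz k)
      ≤ 2 ^ r * ((nz j ^ r * Real.exp (τ * nz j)) * Real.exp (τ * nz (k - j))
          + Real.exp (τ * nz j) * (nz (k - j) ^ r * Real.exp (τ * nz (k - j)))) := by
  have hA := nz_nonneg j
  have hB := nz_nonneg (k - j)
  have ht := nz_triangle k j
  have h1 : nz k ^ r ≤ 2 ^ r * (nz j ^ r + nz (k - j) ^ r) :=
    le_trans (Real.rpow_le_rpow (nz_nonneg k) ht hr) (rpow_add_le r hr hA hB)
  have h2 : Real.exp (τ * nz k) ≤ Real.exp (τ * nz j) * Real.exp (τ * nz (k - j)) := by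
    rw [← Real.exp_add]
    apply Real.exp_le_exp.2
    have := mul_le_mul_of_nonneg_left ht hτ
    linarith [this, mul_add τ (nz j) (nz (k - j))]
  calc nz k ^ r * Real.exp (τ * nz k)
      ≤ (2 ^ r * (nz j ^ r + nz (k - j) ^ r))
          * (Real.exp (τ * nz j) * Real.exp (τ * nz (k - j))) := by
        apply mul_le_mul h1 h2 (Real.exp_pos _).le
        positivity
    _ = _ := by ring

lemma u_bound {r τ : ℝ} (hr : 0 ≤ r) (hτ : 0 ≤ τ) (k j : ℤ × ℤ) :
    u r τ k ≤ ENNReal.ofReal (2 ^ r)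
      * (u r τ j * v τ (k - j) + v τ j * u r τ (k - j)) := by
  calc u r τ k
      ≤ ENNReal.ofReal (2 ^ r * ((nz j ^ r * Real.exp (τ * nz j)) * Real.exp (τ * nz (k - j))
          + Real.exp (τ * nz j) * (nz (k - j) ^ r * Real.exp (τ * nz (k - j))))) :=
        ENNReal.ofReal_le_ofReal (real_weight hr hτ k j)
    _ = _ := by
        have e1 : (0:ℝ) ≤ nz j ^ r * Real.exp (τ * nz j) :=
          mul_nonneg (Real.rpow_nonneg (nz_nonneg j) r) (Real.exp_pos _).le
        have e2 : (0:ℝ) ≤ nz (k - j) ^ r * Real.exp (τ * nz (k - j)) :=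
          mul_nonneg (Real.rpow_nonneg (nz_nonneg (k - j)) r) (Real.exp_pos _).le
        simp only [u, v]
        rw [ENNReal.ofReal_mul (show (0:ℝ) ≤ 2 ^ r by positivity)]
        congr 1
        rw [ENNReal.ofReal_add (mul_nonneg e1 (Real.exp_pos _).le)
            (mul_nonneg (Real.exp_pos _).le e2),
          ENNReal.ofReal_mul e1, ENNReal.ofReal_mul (Real.exp_pos _).le]

lemma l1_bound (r τ : ℝ) (a : ℤ × ℤ → ℝ≥0∞) :
    ∑' m, v τ m * a m ≤ a 0 + K r * (∑' m, (u r τ m * a m) ^ 2) ^ ((1:ℝ)/2) := by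
  rw [ENNReal.tsum_eq_add_tsum_ite (0 : ℤ × ℤ)]
  have h0 : v τ 0 * a 0 = a 0 := by
    simp [v, nz_zero]
  apply add_le_add h0.le
  refine le_trans (ENNReal.tsum_le_tsum fun m => ?_)
    (cauchy_schwarz (hfun r) (fun m => u r τ m * a m))
  by_cases hm : m = 0
  · simp [hm]
  · simp only [hfun, if_neg hm]
    have hv : v τ m = ENNReal.ofReal (nz m ^ (-r)) * u r τ m := by
      rw [u, v, ← ENNReal.ofReal_mul (Real.rpow_nonneg (nz_nonneg m) _)]
      congr 1
      rw [← mul_assoc, ← Real.rpow_add (nz_pos hm)]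
      simp
    rw [hv, mul_assoc]

lemma K_ne_top {r : ℝ} (hr : 1 < r) : K r ≠ ⊤ := by
  have hr0 : (0:ℝ) ≤ r := by linarith
  set g : ℤ → ℝ := fun n => 2 ^ r * (1 + |(n : ℝ)|) ^ (-r) with hg
  have hg_nonneg : ∀ n : ℤ, 0 ≤ g n := by
    intro n
    apply mul_nonneg (by positivity)
    apply Real.rpow_nonneg
    positivity
  -- pointwise bound
  have hpt : ∀ m : ℤ × ℤ, hfun r m ^ 2 ≤ ENNReal.ofReal (g m.1) * ENNReal.ofReal (g m.2) := by
    intro m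
    by_cases hm : m = 0
    · simp [hfun, hm]
    · have h1m : (1:ℝ) ≤ nz m := one_le_nz hm
      rw [hfun, if_neg hm, ← ENNReal.ofReal_pow (Real.rpow_nonneg (nz_nonneg m) _),
        ← ENNReal.ofReal_mul (hg_nonneg m.1)]
      apply ENNReal.ofReal_le_ofReal
      -- real inequality
      have habs1 : (0:ℝ) ≤ |(m.1 : ℝ)| := abs_nonneg _
      have habs2 : (0:ℝ) ≤ |(m.2 : ℝ)| := abs_nonneg _
      have hmx : (1:ℝ) ≤ max |(m.1 : ℝ)| |(m.2 : ℝ)| := by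
        have h1 : m.1 ≠ 0 ∨ m.2 ≠ 0 := by
          by_contra hc
          push_neg at hc
          exact hm (Prod.ext hc.1 hc.2)
        rcases h1 with h1 | h1
        · exact le_max_of_le_left (by exact_mod_cast Int.one_le_abs h1)
        · exact le_max_of_le_right (by exact_mod_cast Int.one_le_abs h1)
      have hP : (1 + |(m.1:ℝ)|) * (1 + |(m.2:ℝ)|) ≤ 4 * nz m ^ 2 := by
        have hsq : nz m ^ 2 = (m.1:ℝ)^2 + (m.2:ℝ)^2 := Real.sq_sqrt (by positivity)
        have hmx2 : (max |(m.1 : ℝ)| |(m.2 : ℝ)|) ^ 2 ≤ (m.1:ℝ)^2 + (m.2:ℝ)^2 := by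
          rcases max_cases |(m.1 : ℝ)| |(m.2 : ℝ)| with ⟨he, _⟩ | ⟨he, _⟩ <;>
            rw [he] <;> nlinarith [sq_abs (m.1:ℝ), sq_abs (m.2:ℝ), sq_nonneg (m.1:ℝ), sq_nonneg (m.2:ℝ)]
        have e1 : 1 + |(m.1:ℝ)| ≤ 2 * max |(m.1 : ℝ)| |(m.2 : ℝ)| := by
          have := le_max_left |(m.1 : ℝ)| |(m.2 : ℝ)|
          linarith
        have e2 : 1 + |(m.2:ℝ)| ≤ 2 * max |(m.1 : ℝ)| |(m.2 : ℝ)| := by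
          have := le_max_right |(m.1 : ℝ)| |(m.2 : ℝ)|
          linarith
        nlinarith [hmx, hsq]
      have hPpos : (0:ℝ) < (1 + |(m.1:ℝ)|) * (1 + |(m.2:ℝ)|) := by positivity
      -- (nz m ^ (-r))^2 = (nz m ^ 2) ^ (-r)
      have hsq' : (nz m ^ (-r)) ^ 2 = (nz m ^ 2) ^ (-r) := by
        rw [← Real.rpow_natCast (nz m ^ (-r)) 2, ← Real.rpow_mul (nz_nonneg m),
          ← Real.rpow_natCast (nz m) 2, ← Real.rpow_mul (nz_nonneg m)]
        ring_nf
      have hchain : (nz m ^ 2) ^ (-r) ≤ ((1 + |(m.1:ℝ)|) * (1 + |(m.2:ℝ)|) / 4) ^ (-r) := by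
        apply Real.rpow_le_rpow_of_nonpos (by positivity) (by nlinarith) (by linarith)
      have hquot : ((1 + |(m.1:ℝ)|) * (1 + |(m.2:ℝ)|) / 4) ^ (-r)
          = g m.1 * g m.2 := by
        rw [hg]
        have h4 : ((4:ℝ)) = 2 * 2 := by norm_num
        rw [Real.div_rpow (by positivity) (by norm_num),
          Real.mul_rpow (by positivity) (by positivity)]
        rw [h4, Real.mul_rpow (by norm_num) (by norm_num)]
        rw [Real.rpow_neg (by norm_num : (0:ℝ) ≤ 2)]
        field_simp
      rw [hsq']
      calc (nz m ^ 2) ^ (-r) ≤ ((1 + |(m.1:ℝ)|) * (1 + |(m.2:ℝ)|) / 4) ^ (-r) := hchain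
        _ = g m.1 * g m.2 := hquot
  -- summability over ℤ
  have hgsum : Summable g := by
    have hbase : Summable (fun n : ℕ => ((n:ℝ)) ^ (-r)) :=
      Real.summable_nat_rpow.mpr (by linarith)
    have hnat : Summable (fun n : ℕ => ((1:ℝ) + n) ^ (-r)) := by
      have h2 := hbase.comp_injective (add_right_injective 1)
      apply h2.congr
      intro n
      simp only [Function.comp]
      norm_num
    apply Summable.mul_left
    apply Summable.of_nat_of_neg
    · apply hnat.congr
      intro n
      simp
    · apply hnat.congr
      intro n
      simp
  have hgtop : (∑' n : ℤ, ENNReal.ofReal (g n)) ≠ ⊤ := by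
    rw [← ENNReal.ofReal_tsum_of_nonneg hg_nonneg hgsum]
    exact ENNReal.ofReal_ne_top
  have hT : (∑' m : ℤ × ℤ, hfun r m ^ 2) ≠ ⊤ := by
    apply ne_top_of_le_ne_top _ (ENNReal.tsum_le_tsum hpt)
    rw [ENNReal.tsum_prod']
    calc (∑' (a : ℤ) (b : ℤ), ENNReal.ofReal (g a) * ENNReal.ofReal (g b))
        = ∑' (a : ℤ), ENNReal.ofReal (g a) * ∑' (b : ℤ), ENNReal.ofReal (g b) := by
          congr 1; funext a; exact ENNReal.tsum_mul_left
      _ = (∑' (a : ℤ), ENNReal.ofReal (g a)) * ∑' (b : ℤ), ENNReal.ofReal (g b) :=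
          ENNReal.tsum_mul_right
      _ ≠ ⊤ := ENNReal.mul_ne_top hgtop hgtop
  exact ENNReal.rpow_ne_top_of_nonneg (by norm_num) hT

lemma S_eq (r τ : ℝ) (a : ℤ × ℤ → ℝ≥0∞) :
    S r τ a = (∑' k, (u r τ k * a k) ^ 2) ^ ((1:ℝ)/2) := by
  rw [S]
  congr 1
  exact tsum_congr fun k => by rw [W_eq r τ k, mul_pow]

end AGA

open AGA

/-- Fourier-coefficient form of the analytic-Gevrey algebra property
`‖A^r e^{τA}(fg)‖ ≤ C_r (|f̂₀| + ‖A^r e^{τA} f‖)(|ĝ₀| + ‖A^r e^{τA} g‖)`. -/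
theorem analytic_gevrey_algebra :
    ∀ r : ℝ, 1 < r → ∃ C : ℝ, 0 < C ∧ ∀ τ : ℝ, 0 ≤ τ → ∀ a b : ℤ × ℤ → ℝ≥0∞,
      (∑' k : ℤ × ℤ, ENNReal.ofReal (nz k ^ (2 * r) * Real.exp (2 * τ * nz k)) *
          (∑' j : ℤ × ℤ, a j * b (k - j)) ^ 2) ^ ((1 : ℝ) / 2)
        ≤ ENNReal.ofReal C * (a 0 + S r τ a) * (b 0 + S r τ b) := by
  intro r hr
  have hr0 : (0:ℝ) ≤ r := by linarith
  have hK : K r ≠ ⊤ := K_ne_top hr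
  set Kr : ℝ := (K r).toReal with hKrdef
  have hKr0 : 0 ≤ Kr := ENNReal.toReal_nonneg
  refine ⟨2 ^ r * (Kr + 1) * 2, by positivity, ?_⟩
  intro τ hτ a b
  set D : ℝ≥0∞ := ENNReal.ofReal (2 ^ r) with hD
  set E : ℝ≥0∞ := ENNReal.ofReal (Kr + 1) with hE
  have hKE : K r ≤ E := by
    rw [hE, ← ENNReal.ofReal_toReal hK, ← hKrdef]
    exact ENNReal.ofReal_le_ofReal (by linarith)
  have h1E : (1 : ℝ≥0∞) ≤ E := by
    rw [hE]
    exact ENNReal.one_le_ofReal.mpr (by linarith)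
  set UA : ℤ × ℤ → ℝ≥0∞ := fun m => u r τ m * a m with hUA
  set VA : ℤ × ℤ → ℝ≥0∞ := fun m => v τ m * a m with hVA
  set UB : ℤ × ℤ → ℝ≥0∞ := fun m => u r τ m * b m with hUB
  set VB : ℤ × ℤ → ℝ≥0∞ := fun m => v τ m * b m with hVB
  set Sa : ℝ≥0∞ := (∑' m, UA m ^ 2) ^ ((1:ℝ)/2) with hSa
  set Sb : ℝ≥0∞ := (∑' m, UB m ^ 2) ^ ((1:ℝ)/2) with hSb
  set c : ℤ × ℤ → ℝ≥0∞ := fun k => ∑' j, a j * b (k - j) with hc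
  set P : ℤ × ℤ → ℝ≥0∞ := fun k => ∑' j, UA j * VB (k - j) with hP
  set Q : ℤ × ℤ → ℝ≥0∞ := fun k => ∑' j, VA j * UB (k - j) with hQ
  -- rewrite LHS
  have hLHS : (∑' k : ℤ × ℤ, ENNReal.ofReal (nz k ^ (2 * r) * Real.exp (2 * τ * nz k)) *
      c k ^ 2) = ∑' k, (u r τ k * c k) ^ 2 := by
    exact tsum_congr fun k => by rw [W_eq r τ k, mul_pow]
  -- pointwise convolution bound
  have hpt : ∀ k, u r τ k * c k ≤ D * (P k + Q k) := by
    intro k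
    have h1 : u r τ k * c k = ∑' j, u r τ k * (a j * b (k - j)) := by
      rw [hc, ENNReal.tsum_mul_left]
    rw [h1]
    have h2 : ∀ j, u r τ k * (a j * b (k - j))
        ≤ D * (UA j * VB (k - j) + VA j * UB (k - j)) := by
      intro j
      calc u r τ k * (a j * b (k - j))
          ≤ (D * (u r τ j * v τ (k - j) + v τ j * u r τ (k - j))) * (a j * b (k - j)) :=
            mul_le_mul_left (u_bound hr0 hτ k j) _
        _ = D * (UA j * VB (k - j) + VA j * UB (k - j)) := by
            rw [hUA, hVB, hVA, hUB]
            ring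
    calc (∑' j, u r τ k * (a j * b (k - j)))
        ≤ ∑' j, D * (UA j * VB (k - j) + VA j * UB (k - j)) := ENNReal.tsum_le_tsum h2
      _ = D * (P k + Q k) := by rw [ENNReal.tsum_mul_left, ENNReal.tsum_add]
  -- main estimate
  have main : (∑' k, (u r τ k * c k) ^ 2) ^ ((1:ℝ)/2)
      ≤ D * (((∑' k, P k ^ 2) ^ ((1:ℝ)/2)) + ((∑' k, Q k ^ 2) ^ ((1:ℝ)/2))) := by
    calc (∑' k, (u r τ k * c k) ^ 2) ^ ((1:ℝ)/2)
        ≤ (∑' k, (D * (P k + Q k)) ^ 2) ^ ((1:ℝ)/2) := by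
          apply ENNReal.rpow_le_rpow _ (by norm_num)
          exact ENNReal.tsum_le_tsum fun k => pow_le_pow_left₀ zero_le (hpt k) 2
      _ = (D ^ 2 * ∑' k, (P k + Q k) ^ 2) ^ ((1:ℝ)/2) := by
          rw [← ENNReal.tsum_mul_left]
          congr 1
          exact tsum_congr fun k => by rw [mul_pow]
      _ = D * (∑' k, (P k + Q k) ^ 2) ^ ((1:ℝ)/2) := by
          rw [ENNReal.mul_rpow_of_nonneg _ _ (by norm_num : (0:ℝ) ≤ 1/2), sqrt_sq']
      _ ≤ D * (((∑' k, P k ^ 2) ^ ((1:ℝ)/2)) + ((∑' k, Q k ^ 2) ^ ((1:ℝ)/2))) :=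
          mul_le_mul_right (minkowski P Q) D
  -- Young bounds
  have hPy : (∑' k, P k ^ 2) ^ ((1:ℝ)/2) ≤ (∑' m, VB m) * Sa := by
    have hcomm : ∀ k, P k = ∑' j, VB j * UA (k - j) := fun k => conv_comm UA VB k
    calc (∑' k, P k ^ 2) ^ ((1:ℝ)/2)
        = (∑' k, (∑' j, VB j * UA (k - j)) ^ 2) ^ ((1:ℝ)/2) := by
          congr 1
          exact tsum_congr fun k => by rw [hcomm k]
      _ ≤ (∑' m, VB m) * (∑' m, UA m ^ 2) ^ ((1:ℝ)/2) := young VB UA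
  have hQy : (∑' k, Q k ^ 2) ^ ((1:ℝ)/2) ≤ (∑' m, VA m) * Sb := young VA UB
  -- ℓ¹ bounds
  have hVBb : (∑' m, VB m) ≤ b 0 + K r * Sb := l1_bound r τ b
  have hVAa : (∑' m, VA m) ≤ a 0 + K r * Sa := l1_bound r τ a
  -- put it together
  have hSaS : S r τ a = Sa := S_eq r τ a
  have hSbS : S r τ b = Sb := S_eq r τ b
  rw [hLHS, hSaS, hSbS]
  have hfin1 : (∑' m, VB m) * Sa ≤ E * ((a 0 + Sa) * (b 0 + Sb)) := by
    calc (∑' m, VB m) * Sa ≤ (b 0 + K r * Sb) * Sa := mul_le_mul_left hVBb _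
      _ ≤ (E * (b 0 + Sb)) * (a 0 + Sa) := by
          apply mul_le_mul'
          · calc b 0 + K r * Sb ≤ E * b 0 + E * Sb :=
                add_le_add (le_mul_of_one_le_left zero_le h1E)
                  (mul_le_mul_left hKE _)
              _ = E * (b 0 + Sb) := by rw [mul_add]
          · exact le_add_self
      _ = E * ((a 0 + Sa) * (b 0 + Sb)) := by ring
  have hfin2 : (∑' m, VA m) * Sb ≤ E * ((a 0 + Sa) * (b 0 + Sb)) := by
    calc (∑' m, VA m) * Sb ≤ (a 0 + K r * Sa) * Sb := mul_le_mul_left hVAa _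
      _ ≤ (E * (a 0 + Sa)) * (b 0 + Sb) := by
          apply mul_le_mul'
          · calc a 0 + K r * Sa ≤ E * a 0 + E * Sa :=
                add_le_add (le_mul_of_one_le_left zero_le h1E)
                  (mul_le_mul_left hKE _)
              _ = E * (a 0 + Sa) := by rw [mul_add]
          · exact le_add_self
      _ = E * ((a 0 + Sa) * (b 0 + Sb)) := by ring
  have hC : ENNReal.ofReal (2 ^ r * (Kr + 1) * 2) = D * E * 2 := by
    rw [ENNReal.ofReal_mul (by positivity), ENNReal.ofReal_mul (by positivity)]
    norm_num [hD, hE]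
  calc (∑' k, (u r τ k * c k) ^ 2) ^ ((1:ℝ)/2)
      ≤ D * (((∑' k, P k ^ 2) ^ ((1:ℝ)/2)) + ((∑' k, Q k ^ 2) ^ ((1:ℝ)/2))) := main
    _ ≤ D * ((∑' m, VB m) * Sa + (∑' m, VA m) * Sb) :=
        mul_le_mul_right (add_le_add hPy hQy) D
    _ ≤ D * (E * ((a 0 + Sa) * (b 0 + Sb)) + E * ((a 0 + Sa) * (b 0 + Sb))) :=
        mul_le_mul_right (add_le_add hfin1 hfin2) D
    _ = (D * E * 2) * ((a 0 + Sa) * (b 0 + Sb)) := by ring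
    _ = ENNReal.ofReal (2 ^ r * (Kr + 1) * 2) * (a 0 + Sa) * (b 0 + Sb) := by
        rw [hC]; ring

end
end

section
/- For every real r ≥ 1 there exists a constant C_r > 0 such that for every τ ≥ 0 and all real numbers ξ > 0 and η > 0, |ξ^r e^{τξ} − η^r e^{τη}| ≤ C_r |ξ − η| ( |ξ − η|^{r−1} + η^{r−1} + τ(|ξ − η|^r + η^r) e^{τ|ξ−η|} e^{τη} ). -/
open Real Set

private lemma exp_le_one_add_mul_exp {t : ℝ} (_ht : 0 ≤ t) :
    Real.exp t ≤ 1 + t * Real.exp t := by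
  have h := Real.add_one_le_exp (-t)
  have hpos := Real.exp_pos t
  have h2 : (-t + 1) * Real.exp t ≤ Real.exp (-t) * Real.exp t :=
    mul_le_mul_of_nonneg_right h hpos.le
  rw [← Real.exp_add, neg_add_cancel, Real.exp_zero] at h2
  nlinarith

private lemma add_rpow_le2 {a b p : ℝ} (ha : 0 ≤ a) (hb : 0 ≤ b) (hp : 0 ≤ p) :
    (a + b) ^ p ≤ 2 ^ p * (a ^ p + b ^ p) := by
  have hm : a + b ≤ 2 * max a b := by
    rcases le_total a b with h | h
    · rw [max_eq_right h]; linarith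
    · rw [max_eq_left h]; linarith
  have hmax : (max a b) ^ p ≤ a ^ p + b ^ p := by
    rcases le_total a b with h | h
    · rw [max_eq_right h]; nlinarith [Real.rpow_nonneg ha p]
    · rw [max_eq_left h]; nlinarith [Real.rpow_nonneg hb p]
  calc (a + b) ^ p ≤ (2 * max a b) ^ p := Real.rpow_le_rpow (by linarith) hm hp
    _ = 2 ^ p * (max a b) ^ p := Real.mul_rpow (by norm_num) (le_trans ha (le_max_left a b))
    _ ≤ 2 ^ p * (a ^ p + b ^ p) := by
        have : (0:ℝ) ≤ 2 ^ p := Real.rpow_nonneg (by norm_num) p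
        nlinarith

/-- For every `r ≥ 1` there is `C_r > 0` such that for all `τ ≥ 0` and `ξ, η > 0`,
`|ξ^r e^{τξ} − η^r e^{τη}| ≤ C_r |ξ−η| (|ξ−η|^{r−1} + η^{r−1}
  + τ(|ξ−η|^r + η^r) e^{τ|ξ−η|} e^{τη})`. -/
theorem rpow_exp_diff_estimate :
    ∀ r : ℝ, 1 ≤ r → ∃ C : ℝ, 0 < C ∧ ∀ τ : ℝ, 0 ≤ τ → ∀ ξ η : ℝ, 0 < ξ → 0 < η →
      |ξ ^ r * Real.exp (τ * ξ) - η ^ r * Real.exp (τ * η)|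
        ≤ C * |ξ - η| * (|ξ - η| ^ (r - 1) + η ^ (r - 1)
            + τ * (|ξ - η| ^ r + η ^ r) * Real.exp (τ * |ξ - η|) * Real.exp (τ * η)) := by
  intro r hr
  refine ⟨(r + 1) * 2 ^ r, by positivity, ?_⟩
  intro τ hτ ξ η hξ hη
  set C : ℝ := (r + 1) * 2 ^ r with hC
  set D : ℝ := |ξ - η| with hD
  set M : ℝ := max ξ η with hM
  have hD0 : 0 ≤ D := abs_nonneg _
  have hM0 : 0 < M := lt_max_of_lt_left hξ
  have hMle : M ≤ D + η := by
    rw [hM, hD]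
    rcases le_total ξ η with h | h
    · rw [max_eq_right h]; nlinarith [abs_nonneg (ξ - η)]
    · rw [max_eq_left h, abs_of_nonneg (by linarith : (0:ℝ) ≤ ξ - η)]; linarith
  -- MVT step
  set f : ℝ → ℝ := fun x => x ^ r * Real.exp (τ * x) with hf
  set f' : ℝ → ℝ := fun x => (r * x ^ (r - 1)) * Real.exp (τ * x) + x ^ r * (Real.exp (τ * x) * τ)
    with hf'
  set K : ℝ := (r * M ^ (r - 1) + τ * M ^ r) * Real.exp (τ * M) with hK
  have hmin : 0 < min ξ η := lt_min hξ hη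
  have hs : ∀ x ∈ uIcc η ξ, 0 < x ∧ x ≤ M := by
    intro x hx
    rw [uIcc_eq_union] at hx
    constructor
    · rcases hx with hx | hx
      · exact lt_of_lt_of_le hη hx.1
      · exact lt_of_lt_of_le hξ hx.1
    · rcases hx with hx | hx
      · exact hx.2.trans (le_max_left ξ η)
      · exact hx.2.trans (le_max_right ξ η)
  have hderiv : ∀ x ∈ uIcc η ξ, HasDerivWithinAt f (f' x) (uIcc η ξ) x := by
    intro x hx
    have hx0 : x ≠ 0 := (hs x hx).1.ne'
    have h1 : HasDerivAt (fun x : ℝ => x ^ r) (r * x ^ (r - 1)) x :=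
      Real.hasDerivAt_rpow_const (Or.inl hx0)
    have h2 : HasDerivAt (fun x : ℝ => Real.exp (τ * x)) (Real.exp (τ * x) * τ) x := by
      have := (Real.hasDerivAt_exp (τ * x)).comp x ((hasDerivAt_id x).const_mul τ)
      exact this.congr_deriv (by ring)
    exact ((h1.mul h2)).hasDerivWithinAt
  have hbound : ∀ x ∈ uIcc η ξ, ‖f' x‖ ≤ K := by
    intro x hx
    obtain ⟨hx0, hxM⟩ := hs x hx
    have he : Real.exp (τ * x) ≤ Real.exp (τ * M) :=
      Real.exp_le_exp.2 (mul_le_mul_of_nonneg_left hxM hτ)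
    have h1 : x ^ (r - 1) ≤ M ^ (r - 1) := Real.rpow_le_rpow hx0.le hxM (by linarith)
    have h2 : x ^ r ≤ M ^ r := Real.rpow_le_rpow hx0.le hxM (by linarith)
    have hfx : f' x = (r * x ^ (r - 1) + τ * x ^ r) * Real.exp (τ * x) := by
      rw [hf']; ring
    rw [Real.norm_eq_abs, hfx, abs_of_nonneg (by positivity)]
    have hex : (0:ℝ) < Real.exp (τ * x) := Real.exp_pos _
    have heM : (0:ℝ) < Real.exp (τ * M) := Real.exp_pos _
    have hr0 : (0:ℝ) ≤ r := by linarith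
    have hxr : (0:ℝ) ≤ x ^ (r-1) := Real.rpow_nonneg hx0.le _
    have hxr2 : (0:ℝ) ≤ x ^ r := Real.rpow_nonneg hx0.le _
    rw [hK]
    have ha : r * x ^ (r-1) + τ * x ^ r ≤ r * M ^ (r-1) + τ * M ^ r :=
      add_le_add (mul_le_mul_of_nonneg_left h1 hr0) (mul_le_mul_of_nonneg_left h2 hτ)
    have ha0 : (0:ℝ) ≤ r * x ^ (r-1) + τ * x ^ r :=
      add_nonneg (mul_nonneg hr0 hxr) (mul_nonneg hτ hxr2)
    exact mul_le_mul ha he hex.le (le_trans ha0 ha)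
  have hmvt := (convex_uIcc η ξ).norm_image_sub_le_of_norm_hasDerivWithin_le hderiv hbound
    (left_mem_uIcc) (right_mem_uIcc)
  rw [Real.norm_eq_abs, Real.norm_eq_abs] at hmvt
  -- hmvt : |f ξ - f η| ≤ K * |ξ - η|
  have hK0 : 0 ≤ K := by
    rw [hK]
    have : (0:ℝ) ≤ M ^ (r-1) := Real.rpow_nonneg hM0.le _
    have : (0:ℝ) ≤ M ^ r := Real.rpow_nonneg hM0.le _
    positivity
  -- now bound K by C * T
  set T : ℝ := D ^ (r - 1) + η ^ (r - 1) + τ * (D ^ r + η ^ r) * Real.exp (τ * D) * Real.exp (τ * η)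
    with hT
  have hKC : K ≤ C * T := by
    have hEsplit : Real.exp (τ * M) ≤ Real.exp (τ * D) * Real.exp (τ * η) := by
      rw [← Real.exp_add]
      exact Real.exp_le_exp.2 (by nlinarith)
    have hexp1 : Real.exp (τ * M) ≤ 1 + (τ * M) * Real.exp (τ * M) :=
      exp_le_one_add_mul_exp (by positivity)
    have hMr1 : M ^ (r - 1) ≤ 2 ^ (r-1) * (D ^ (r-1) + η ^ (r-1)) := by
      calc M ^ (r-1) ≤ (D + η) ^ (r-1) := Real.rpow_le_rpow hM0.le hMle (by linarith)
        _ ≤ 2 ^ (r-1) * (D ^ (r-1) + η ^ (r-1)) := add_rpow_le2 hD0 hη.le (by linarith)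
    have hMr : M ^ r ≤ 2 ^ r * (D ^ r + η ^ r) := by
      calc M ^ r ≤ (D + η) ^ r := Real.rpow_le_rpow hM0.le hMle (by linarith)
        _ ≤ 2 ^ r * (D ^ r + η ^ r) := add_rpow_le2 hD0 hη.le (by linarith)
    have hMrM : M ^ (r - 1) * M = M ^ r := by
      rw [← Real.rpow_add_one hM0.ne']; ring_nf
    -- K = (r M^{r-1} + τ M^r) e^{τM} ≤ r M^{r-1}(1 + τM e^{τM}) + τ M^r e^{τM}
    --   = r M^{r-1} + (r+1) τ M^r e^{τM}
    have step1 : K ≤ r * M ^ (r-1) + (r + 1) * (τ * M ^ r * Real.exp (τ * M)) := by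
      rw [hK]
      have h1 : (0:ℝ) ≤ M ^ (r-1) := Real.rpow_nonneg hM0.le _
      have h2 : (0:ℝ) ≤ M ^ r := Real.rpow_nonneg hM0.le _
      have heM : (0:ℝ) < Real.exp (τ * M) := Real.exp_pos _
      have hr1 : (0:ℝ) ≤ r * M ^ (r-1) := mul_nonneg (by linarith) h1
      have key : r * M ^ (r-1) * Real.exp (τ * M) ≤
          r * M ^ (r-1) + r * τ * M ^ r * Real.exp (τ * M) := by
        calc r * M ^ (r-1) * Real.exp (τ * M)
            ≤ r * M ^ (r-1) * (1 + τ * M * Real.exp (τ * M)) :=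
              mul_le_mul_of_nonneg_left hexp1 hr1
          _ = r * M ^ (r-1) + r * τ * (M ^ (r-1) * M) * Real.exp (τ * M) := by ring
          _ = r * M ^ (r-1) + r * τ * M ^ r * Real.exp (τ * M) := by rw [hMrM]
      nlinarith [key]
    have step2 : r * M ^ (r-1) ≤ C * (D ^ (r-1) + η ^ (r-1)) := by
      have h2 : (0:ℝ) < 2 ^ (r-1) := Real.rpow_pos_of_pos (by norm_num) _
      have h3 : (2:ℝ) ^ (r-1) ≤ 2 ^ r := Real.rpow_le_rpow_of_exponent_le (by norm_num) (by linarith)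
      have h4 : (0:ℝ) ≤ D ^ (r-1) + η ^ (r-1) :=
        add_nonneg (Real.rpow_nonneg hD0 _) (Real.rpow_nonneg hη.le _)
      calc r * M ^ (r-1) ≤ r * (2 ^ (r-1) * (D ^ (r-1) + η ^ (r-1))) :=
            mul_le_mul_of_nonneg_left hMr1 (by linarith)
        _ ≤ (r + 1) * (2 ^ r * (D ^ (r-1) + η ^ (r-1))) :=
            mul_le_mul (by linarith) (mul_le_mul_of_nonneg_right h3 h4)
              (by positivity) (by linarith)
        _ = C * (D ^ (r-1) + η ^ (r-1)) := by rw [hC]; ring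
    have step3 : (r + 1) * (τ * M ^ r * Real.exp (τ * M)) ≤
        C * (τ * (D ^ r + η ^ r) * Real.exp (τ * D) * Real.exp (τ * η)) := by
      have heM : (0:ℝ) < Real.exp (τ * M) := Real.exp_pos _
      have hee : (0:ℝ) < Real.exp (τ * D) * Real.exp (τ * η) := by positivity
      have h2 : (0:ℝ) < 2 ^ r := Real.rpow_pos_of_pos (by norm_num) _
      have h4 : (0:ℝ) ≤ D ^ r + η ^ r :=
        add_nonneg (Real.rpow_nonneg hD0 _) (Real.rpow_nonneg hη.le _)
      have h5 : (0:ℝ) ≤ M ^ r := Real.rpow_nonneg hM0.le _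
      have key : M ^ r * Real.exp (τ * M) ≤
          (2 ^ r * (D ^ r + η ^ r)) * (Real.exp (τ * D) * Real.exp (τ * η)) := by
        calc M ^ r * Real.exp (τ * M) ≤ M ^ r * (Real.exp (τ * D) * Real.exp (τ * η)) :=
              mul_le_mul_of_nonneg_left hEsplit h5
          _ ≤ (2 ^ r * (D ^ r + η ^ r)) * (Real.exp (τ * D) * Real.exp (τ * η)) :=
              mul_le_mul_of_nonneg_right hMr hee.le
      rw [hC]
      nlinarith [mul_le_mul_of_nonneg_left key (mul_nonneg (by linarith : (0:ℝ) ≤ r + 1) hτ)]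
    rw [hT]
    calc K ≤ r * M ^ (r-1) + (r + 1) * (τ * M ^ r * Real.exp (τ * M)) := step1
      _ ≤ C * (D ^ (r-1) + η ^ (r-1)) +
          C * (τ * (D ^ r + η ^ r) * Real.exp (τ * D) * Real.exp (τ * η)) := add_le_add step2 step3
      _ = C * (D ^ (r-1) + η ^ (r-1) + τ * (D ^ r + η ^ r) * Real.exp (τ * D) * Real.exp (τ * η)) := by
          ring
  calc |ξ ^ r * Real.exp (τ * ξ) - η ^ r * Real.exp (τ * η)| ≤ K * |ξ - η| := hmvt
    _ ≤ (C * T) * D := mul_le_mul_of_nonneg_right hKC hD0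
    _ = C * D * T := by ring
end

section
/- For every real r > 1 there exists a constant C_r > 0 such that for every τ ≥ 0 and all a, b, c : ℤ² → [0,∞]: ∑_{(j,k)∈ℤ²×ℤ²} ‖j‖^{r+1/2} ‖k‖^{1/2} ‖j+k‖^{r} e^{τ‖j‖} e^{τ‖k‖} e^{τ‖j+k‖} a(j) b(k) c(j+k) ≤ C_r · S_{r+1/2,τ}(a) · S_{r+1/2,τ}(b) · S_{r,τ}(c). -/
open scoped ENNReal
open MeasureTheory

noncomputable section

lemma nz_nonneg (k : ℤ × ℤ) : 0 ≤ nz k := Real.sqrt_nonneg _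

lemma one_le_nz {k : ℤ × ℤ} (hk : k ≠ 0) : 1 ≤ nz k := by
  have h1 : (1 : ℤ) ≤ k.1 ^ 2 + k.2 ^ 2 := by
    have hor : k.1 ≠ 0 ∨ k.2 ≠ 0 := by
      by_contra hc
      push_neg at hc
      exact hk (Prod.ext hc.1 hc.2)
    rcases hor with h | h
    · have := Int.one_le_abs h
      nlinarith [sq_nonneg k.2, sq_abs k.1]
    · have := Int.one_le_abs h
      nlinarith [sq_nonneg k.1, sq_abs k.2]
  have h1' : (1 : ℝ) ≤ (k.1 : ℝ) ^ 2 + (k.2 : ℝ) ^ 2 := by exact_mod_cast h1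
  rw [nz, show (1:ℝ) = Real.sqrt 1 by simp]
  exact Real.sqrt_le_sqrt h1'

lemma abs_fst_le_nz (k : ℤ × ℤ) : |(k.1 : ℝ)| ≤ nz k := by
  rw [nz, ← Real.sqrt_sq_eq_abs]
  exact Real.sqrt_le_sqrt (by nlinarith [sq_nonneg (k.2 : ℝ)])

lemma abs_snd_le_nz (k : ℤ × ℤ) : |(k.2 : ℝ)| ≤ nz k := by
  rw [nz, ← Real.sqrt_sq_eq_abs]
  exact Real.sqrt_le_sqrt (by nlinarith [sq_nonneg (k.1 : ℝ)])

lemma ennreal_cs (f g : ℤ × ℤ → ℝ≥0∞) :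
    ∑' i, f i * g i ≤ (∑' i, f i ^ 2) ^ ((1:ℝ)/2) * (∑' i, g i ^ 2) ^ ((1:ℝ)/2) := by
  have hconj : Real.HolderConjugate 2 2 := Real.HolderConjugate.two_two
  have h := ENNReal.lintegral_mul_le_Lp_mul_Lq (Measure.count : Measure (ℤ × ℤ)) hconj
    (measurable_of_countable f).aemeasurable (measurable_of_countable g).aemeasurable
  rw [lintegral_count, lintegral_count, lintegral_count] at h
  have e2 : ∀ h : ℤ × ℤ → ℝ≥0∞, ∀ i, h i ^ (2:ℝ) = h i ^ 2 := by
    intro h i; rw [← ENNReal.rpow_natCast (h i) 2]; norm_num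
  calc ∑' i, f i * g i ≤ (∑' i, f i ^ (2:ℝ)) ^ ((1:ℝ)/2) * (∑' i, g i ^ (2:ℝ)) ^ ((1:ℝ)/2) := by
        convert h using 3 <;> norm_num
    _ = (∑' i, f i ^ 2) ^ ((1:ℝ)/2) * (∑' i, g i ^ 2) ^ ((1:ℝ)/2) := by
        simp only [e2]

lemma sq_weight (ρ τ x : ℝ) (hρ : 0 < ρ) (hx : 0 ≤ x) :
    (x ^ ρ * Real.exp (τ * x)) ^ 2 = x ^ (2 * ρ) * Real.exp (2 * τ * x) := by
  have h1 : (x ^ ρ) ^ 2 = x ^ (2 * ρ) := by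
    rw [sq, ← Real.rpow_add' hx (by positivity), two_mul]
  have h2 : Real.exp (τ * x) ^ 2 = Real.exp (2 * τ * x) := by
    rw [sq, ← Real.exp_add]; ring_nf
  rw [mul_pow, h1, h2]

lemma S_eq (ρ τ : ℝ) (hρ : 0 < ρ) (a : ℤ × ℤ → ℝ≥0∞) :
    (∑' k : ℤ × ℤ, (ENNReal.ofReal (nz k ^ ρ * Real.exp (τ * nz k)) * a k) ^ 2) ^ ((1:ℝ)/2)
      = S ρ τ a := by
  unfold S
  congr 1
  refine tsum_congr fun k => ?_
  rw [mul_pow, ← ENNReal.ofReal_pow (mul_nonneg (Real.rpow_nonneg (nz_nonneg k) _) (Real.exp_nonneg _)), sq_weight ρ τ (nz k) hρ (nz_nonneg k)]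

theorem trilinear_A1_term :
    ∀ r : ℝ, 1 < r → ∃ C : ℝ, 0 < C ∧ ∀ τ : ℝ, 0 ≤ τ → ∀ a b c : ℤ × ℤ → ℝ≥0∞,
      (∑' p : (ℤ × ℤ) × (ℤ × ℤ),
          ENNReal.ofReal (nz p.1 ^ (r + 1 / 2) * nz p.2 ^ ((1 : ℝ) / 2)
              * nz (p.1 + p.2) ^ r
              * Real.exp (τ * nz p.1) * Real.exp (τ * nz p.2)
              * Real.exp (τ * nz (p.1 + p.2)))
            * a p.1 * b p.2 * c (p.1 + p.2))
        ≤ ENNReal.ofReal C * S (r + 1 / 2) τ a * S (r + 1 / 2) τ b * S r τ c := by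
  intro r hr
  have hr0 : (0:ℝ) < r := by linarith
  have hrne : -r ≠ 0 := by
    intro h
    nlinarith [neg_eq_zero.mp h]
  -- the comparison function on `ℤ`
  set g : ℤ → ℝ := fun m => (1 + |(m : ℝ)|) ^ (-r) with hg
  have hg_nonneg : ∀ m, 0 ≤ g m := fun m => by positivity
  have hgsum : Summable g := by
    have h1 := Real.summable_abs_int_rpow hr
    have h2 : Summable (fun m : ℤ => if m = 0 then (1:ℝ) else 0) := by
      apply summable_of_ne_finset_zero (s := {0})
      intro m hm
      simp only [Finset.mem_singleton] at hm
      simp [hm]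
    refine Summable.of_nonneg_of_le hg_nonneg (fun m => ?_) (h1.add h2)
    by_cases hm : m = 0
    · subst hm
      have h0r : (0:ℝ) ^ (-r) = 0 := Real.zero_rpow hrne
      simp only [hg, Int.cast_zero, abs_zero, add_zero, if_pos rfl, Real.one_rpow, h0r, if_true]
      norm_num
    · have hm1 : (1 : ℝ) ≤ |(m : ℝ)| := by
        exact_mod_cast Int.one_le_abs hm
      have hle : g m ≤ |(m : ℝ)| ^ (-r) :=
        Real.rpow_le_rpow_of_nonpos (by linarith) (by linarith) (by linarith)
      simp only [hm, if_false, add_zero]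
      linarith
  -- the ENNReal weight `D`
  set D : ℤ × ℤ → ℝ≥0∞ := fun k => ENNReal.ofReal (nz k ^ (-r)) with hD
  set K : ℝ≥0∞ := ∑' k : ℤ × ℤ, D k ^ 2 with hKdef
  -- K is finite
  have hK : K ≠ ⊤ := by
    have hpt : ∀ k : ℤ × ℤ, D k ^ 2
        ≤ ENNReal.ofReal (4 ^ r) * (ENNReal.ofReal (g k.1) * ENNReal.ofReal (g k.2)) := by
      intro k
      rw [hD, ← ENNReal.ofReal_pow (Real.rpow_nonneg (nz_nonneg k) _),
        ← ENNReal.ofReal_mul (hg_nonneg k.1),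
        ← ENNReal.ofReal_mul (by positivity : (0:ℝ) ≤ 4 ^ r)]
      apply ENNReal.ofReal_le_ofReal
      by_cases hk : k = 0
      · subst hk
        have h0 : nz (0 : ℤ × ℤ) = 0 := by simp [nz]
        rw [h0, Real.zero_rpow hrne]
        have hz : ((0:ℝ)) ^ 2 = 0 := by norm_num
        rw [hz]
        exact mul_nonneg (by positivity) (mul_nonneg (hg_nonneg _) (hg_nonneg _))
      · have h1 : 1 ≤ nz k := one_le_nz hk
        have ha := abs_fst_le_nz k
        have hb := abs_snd_le_nz k
        have hprod : (1 + |(k.1 : ℝ)|) * (1 + |(k.2 : ℝ)|) ≤ 4 * nz k ^ 2 := by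
          nlinarith [abs_nonneg (k.1 : ℝ), abs_nonneg (k.2 : ℝ)]
        have hsq : (nz k ^ (-r)) ^ 2 = (nz k ^ 2) ^ (-r) := by
          rw [← Real.rpow_natCast (nz k ^ (-r)) 2, ← Real.rpow_mul (nz_nonneg k),
            ← Real.rpow_natCast (nz k) 2, ← Real.rpow_mul (nz_nonneg k)]
          congr 1
          push_cast
          ring
        rw [hsq]
        have hpos : 0 < (1 + |(k.1 : ℝ)|) * (1 + |(k.2 : ℝ)|) / 4 := by positivity
        have hle : (1 + |(k.1 : ℝ)|) * (1 + |(k.2 : ℝ)|) / 4 ≤ nz k ^ 2 := by linarith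
        have hmain := Real.rpow_le_rpow_of_nonpos hpos hle (by linarith : -r ≤ 0)
        refine le_trans hmain (le_of_eq ?_)
        rw [Real.div_rpow (by positivity) (by norm_num),
          Real.mul_rpow (by positivity) (by positivity),
          Real.rpow_neg (by norm_num : (0:ℝ) ≤ 4)]
        field_simp
        ring
    have hfin : (∑' m : ℤ, ENNReal.ofReal (g m)) ≠ ⊤ := by
      rw [← ENNReal.ofReal_tsum_of_nonneg hg_nonneg hgsum]
      exact ENNReal.ofReal_ne_top
    have hKlt : K < ⊤ := by
      calc K ≤ ∑' k : ℤ × ℤ, ENNReal.ofReal (4 ^ r)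
              * (ENNReal.ofReal (g k.1) * ENNReal.ofReal (g k.2)) := ENNReal.tsum_le_tsum hpt
        _ = ENNReal.ofReal (4 ^ r) * ∑' k : ℤ × ℤ,
              ENNReal.ofReal (g k.1) * ENNReal.ofReal (g k.2) := ENNReal.tsum_mul_left
        _ = ENNReal.ofReal (4 ^ r) * ((∑' m : ℤ, ENNReal.ofReal (g m))
              * (∑' m : ℤ, ENNReal.ofReal (g m))) := by
            rw [ENNReal.tsum_prod (f := fun m n => ENNReal.ofReal (g m) * ENNReal.ofReal (g n))]
            congr 1
            calc ∑' m : ℤ, ∑' n : ℤ, ENNReal.ofReal (g m) * ENNReal.ofReal (g n)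
                = ∑' m : ℤ, ENNReal.ofReal (g m) * ∑' n : ℤ, ENNReal.ofReal (g n) := by
                  exact tsum_congr fun m => ENNReal.tsum_mul_left
              _ = _ := ENNReal.tsum_mul_right
        _ < ⊤ := by
            apply ENNReal.mul_lt_top ENNReal.ofReal_lt_top
            exact ENNReal.mul_lt_top hfin.lt_top hfin.lt_top
    exact hKlt.ne
  -- the constant
  set C : ℝ := (K ^ ((1:ℝ)/2)).toReal + 1 with hCdef
  have hC0 : 0 < C := by
    have := ENNReal.toReal_nonneg (a := K ^ ((1:ℝ)/2))
    rw [hCdef]; linarith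
  have hKC : K ^ ((1:ℝ)/2) ≤ ENNReal.ofReal C := by
    have hne : K ^ ((1:ℝ)/2) ≠ ⊤ := ENNReal.rpow_ne_top_of_nonneg (by norm_num) hK
    conv_lhs => rw [← ENNReal.ofReal_toReal hne]
    exact ENNReal.ofReal_le_ofReal (by rw [hCdef]; linarith)
  refine ⟨C, hC0, ?_⟩
  intro τ hτ a b c
  set A : ℤ × ℤ → ℝ≥0∞ :=
    fun j => ENNReal.ofReal (nz j ^ (r + 1/2) * Real.exp (τ * nz j)) * a j with hA
  set B : ℤ × ℤ → ℝ≥0∞ :=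
    fun k => ENNReal.ofReal (nz k ^ (r + 1/2) * Real.exp (τ * nz k)) * b k with hB
  set Cc : ℤ × ℤ → ℝ≥0∞ :=
    fun l => ENNReal.ofReal (nz l ^ r * Real.exp (τ * nz l)) * c l with hCc
  -- pointwise estimate
  have hpw : ∀ p : (ℤ × ℤ) × (ℤ × ℤ),
      ENNReal.ofReal (nz p.1 ^ (r + 1 / 2) * nz p.2 ^ ((1 : ℝ) / 2)
          * nz (p.1 + p.2) ^ r
          * Real.exp (τ * nz p.1) * Real.exp (τ * nz p.2)
          * Real.exp (τ * nz (p.1 + p.2)))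
        * a p.1 * b p.2 * c (p.1 + p.2)
        ≤ A p.1 * (D p.2 * B p.2) * Cc (p.1 + p.2) := by
    rintro ⟨j, k⟩
    have hW : nz j ^ (r + 1 / 2) * nz k ^ ((1 : ℝ) / 2) * nz (j + k) ^ r
          * Real.exp (τ * nz j) * Real.exp (τ * nz k) * Real.exp (τ * nz (j + k))
        ≤ (nz j ^ (r + 1/2) * Real.exp (τ * nz j))
          * (nz k ^ (-r) * (nz k ^ (r + 1/2) * Real.exp (τ * nz k)))
          * (nz (j + k) ^ r * Real.exp (τ * nz (j + k))) := by
      rcases eq_or_lt_of_le (nz_nonneg k) with h0 | h0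
      · have hzz : nz k ^ ((1:ℝ)/2) = 0 := by
          rw [← h0, Real.zero_rpow (by norm_num : ((1:ℝ)/2) ≠ 0)]
        rw [hzz]
        have hL : nz j ^ (r + 1 / 2) * 0 * nz (j + k) ^ r
            * Real.exp (τ * nz j) * Real.exp (τ * nz k) * Real.exp (τ * nz (j + k)) = 0 := by
          ring
        rw [hL]
        exact mul_nonneg (mul_nonneg
          (mul_nonneg (Real.rpow_nonneg (nz_nonneg j) _) (Real.exp_nonneg _))
          (mul_nonneg (Real.rpow_nonneg (nz_nonneg k) _)
            (mul_nonneg (Real.rpow_nonneg (nz_nonneg k) _) (Real.exp_nonneg _))))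
          (mul_nonneg (Real.rpow_nonneg (nz_nonneg _) _) (Real.exp_nonneg _))
      · have hk2 : nz k ^ (-r) * nz k ^ (r + 1/2) = nz k ^ ((1:ℝ)/2) := by
          rw [← Real.rpow_add h0, show -r + (r + 1/2) = (1:ℝ)/2 by ring]
        rw [← hk2]
        exact le_of_eq (by ring)
    have hstep : ENNReal.ofReal (nz j ^ (r + 1 / 2) * nz k ^ ((1 : ℝ) / 2)
          * nz (j + k) ^ r
          * Real.exp (τ * nz j) * Real.exp (τ * nz k) * Real.exp (τ * nz (j + k)))
        ≤ ENNReal.ofReal ((nz j ^ (r + 1/2) * Real.exp (τ * nz j))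
          * (nz k ^ (-r) * (nz k ^ (r + 1/2) * Real.exp (τ * nz k)))
          * (nz (j + k) ^ r * Real.exp (τ * nz (j + k)))) := ENNReal.ofReal_le_ofReal hW
    calc ENNReal.ofReal (nz j ^ (r + 1 / 2) * nz k ^ ((1 : ℝ) / 2)
          * nz (j + k) ^ r
          * Real.exp (τ * nz j) * Real.exp (τ * nz k) * Real.exp (τ * nz (j + k)))
          * a j * b k * c (j + k)
        ≤ ENNReal.ofReal ((nz j ^ (r + 1/2) * Real.exp (τ * nz j))
          * (nz k ^ (-r) * (nz k ^ (r + 1/2) * Real.exp (τ * nz k)))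
          * (nz (j + k) ^ r * Real.exp (τ * nz (j + k)))) * a j * b k * c (j + k) :=
          mul_le_mul_left (mul_le_mul_left (mul_le_mul_left hstep _) _) _
      _ = A j * (D k * B k) * Cc (j + k) := by
          rw [hA, hB, hCc, hD]
          rw [ENNReal.ofReal_mul (mul_nonneg
              (mul_nonneg (Real.rpow_nonneg (nz_nonneg j) _) (Real.exp_nonneg _))
              (mul_nonneg (Real.rpow_nonneg (nz_nonneg k) _)
                (mul_nonneg (Real.rpow_nonneg (nz_nonneg k) _) (Real.exp_nonneg _)))),
            ENNReal.ofReal_mul (mul_nonneg (Real.rpow_nonneg (nz_nonneg j) _)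
              (Real.exp_nonneg _)),
            ENNReal.ofReal_mul (Real.rpow_nonneg (nz_nonneg k) _)]
          ring
  -- now the chain of estimates
  calc (∑' p : (ℤ × ℤ) × (ℤ × ℤ),
          ENNReal.ofReal (nz p.1 ^ (r + 1 / 2) * nz p.2 ^ ((1 : ℝ) / 2)
              * nz (p.1 + p.2) ^ r
              * Real.exp (τ * nz p.1) * Real.exp (τ * nz p.2)
              * Real.exp (τ * nz (p.1 + p.2)))
            * a p.1 * b p.2 * c (p.1 + p.2))
      ≤ ∑' p : (ℤ × ℤ) × (ℤ × ℤ), A p.1 * (D p.2 * B p.2) * Cc (p.1 + p.2) :=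
        ENNReal.tsum_le_tsum hpw
    _ = ∑' k : ℤ × ℤ, (D k * B k) * ∑' j : ℤ × ℤ, A j * Cc (j + k) := by
        rw [ENNReal.tsum_prod (f := fun j k => A j * (D k * B k) * Cc (j + k)),
          ENNReal.tsum_comm]
        refine tsum_congr fun k => ?_
        rw [← ENNReal.tsum_mul_left]
        exact tsum_congr fun j => by ring
    _ ≤ ∑' k : ℤ × ℤ, (D k * B k)
          * ((∑' j : ℤ × ℤ, A j ^ 2) ^ ((1:ℝ)/2) * (∑' l : ℤ × ℤ, Cc l ^ 2) ^ ((1:ℝ)/2)) := by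
        refine ENNReal.tsum_le_tsum fun k => mul_le_mul_right ?_ _
        calc ∑' j : ℤ × ℤ, A j * Cc (j + k)
            ≤ (∑' j : ℤ × ℤ, A j ^ 2) ^ ((1:ℝ)/2)
              * (∑' j : ℤ × ℤ, Cc (j + k) ^ 2) ^ ((1:ℝ)/2) :=
              ennreal_cs A (fun j => Cc (j + k))
          _ = (∑' j : ℤ × ℤ, A j ^ 2) ^ ((1:ℝ)/2)
              * (∑' l : ℤ × ℤ, Cc l ^ 2) ^ ((1:ℝ)/2) := by
              congr 2
              simpa using (Equiv.addRight k).tsum_eq (fun l => Cc l ^ 2)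
    _ = (∑' k : ℤ × ℤ, D k * B k)
          * ((∑' j : ℤ × ℤ, A j ^ 2) ^ ((1:ℝ)/2) * (∑' l : ℤ × ℤ, Cc l ^ 2) ^ ((1:ℝ)/2)) :=
        ENNReal.tsum_mul_right
    _ ≤ (K ^ ((1:ℝ)/2) * (∑' k : ℤ × ℤ, B k ^ 2) ^ ((1:ℝ)/2))
          * ((∑' j : ℤ × ℤ, A j ^ 2) ^ ((1:ℝ)/2) * (∑' l : ℤ × ℤ, Cc l ^ 2) ^ ((1:ℝ)/2)) := by
        refine mul_le_mul_left ?_ _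
        have := ennreal_cs D B
        rw [← hKdef] at this
        exact this
    _ ≤ (ENNReal.ofReal C * (∑' k : ℤ × ℤ, B k ^ 2) ^ ((1:ℝ)/2))
          * ((∑' j : ℤ × ℤ, A j ^ 2) ^ ((1:ℝ)/2) * (∑' l : ℤ × ℤ, Cc l ^ 2) ^ ((1:ℝ)/2)) :=
        mul_le_mul_left (mul_le_mul_left hKC _) _
    _ = ENNReal.ofReal C * S (r + 1 / 2) τ a * S (r + 1 / 2) τ b * S r τ c := by
        rw [hA, hB, hCc]
        rw [S_eq (r + 1/2) τ (by linarith) a, S_eq (r + 1/2) τ (by linarith) b,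
          S_eq r τ (by linarith) c]
        ring

end
end
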